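/- arXiv:2507.17988 — 3 statements merged into one kernel-verified Lean document; each statement's English description precedes it below -/
import Mathlib

section
/- Let n be a natural number and let A and B be two finite families of subsets of {1,…,n} such that every member of A and every member of B has cardinality exactly ⌊n/2⌋, and A ≠ B. Then there exists a subset μ of {1,…,n} such that exactly one of the following two conditions holds: (i) every member of A has nonempty intersection with μ; (ii) every member of B has nonempty intersection with μ. -/
lemma sep_aux (n : ℕ) (A B : Finset (Finset (Fin n)))
    (hA : ∀ S ∈ A, S.card = n / 2)
    (hB : ∀ S ∈ B, S.card = n / 2)
    (S₀ : Finset (Fin n)) (hS₀A : S₀ ∈ A) (hS₀B : S₀ ∉ B) :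
    ∃ μ : Finset (Fin n),
      Xor' (∀ S ∈ A, (S ∩ μ).Nonempty) (∀ S ∈ B, (S ∩ μ).Nonempty) := by
  refine ⟨S₀ᶜ, Or.inr ⟨?_, ?_⟩⟩
  · intro T hT
    rw [Finset.nonempty_iff_ne_empty]
    intro h
    have hsub : T ⊆ S₀ := by
      intro x hx
      by_contra hxn
      have : x ∈ T ∩ S₀ᶜ := Finset.mem_inter.2 ⟨hx, Finset.mem_compl.2 hxn⟩
      simp [h] at this
    have : T = S₀ := Finset.eq_of_subset_of_card_le hsub
      (by rw [hA S₀ hS₀A, hB T hT])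
    exact hS₀B (this ▸ hT)
  · intro h
    have := h S₀ hS₀A
    simp at this

/-- Let `A` and `B` be two finite families of subsets of `Fin n` all of whose
members have cardinality exactly `⌊n/2⌋`, with `A ≠ B`.  Then there is a
subset `μ` of `Fin n` such that exactly one of the following holds:
every member of `A` meets `μ`; every member of `B` meets `μ`. -/
theorem exists_separating_set_of_ne_families (n : ℕ)
    (A B : Finset (Finset (Fin n)))
    (hA : ∀ S ∈ A, S.card = n / 2)
    (hB : ∀ S ∈ B, S.card = n / 2)
    (hAB : A ≠ B) :
    ∃ μ : Finset (Fin n),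
      Xor' (∀ S ∈ A, (S ∩ μ).Nonempty) (∀ S ∈ B, (S ∩ μ).Nonempty) := by
  by_cases hsub : A ⊆ B
  · have : ¬ B ⊆ A := fun h => hAB (Finset.Subset.antisymm hsub h)
    obtain ⟨S₀, hS₀B, hS₀A⟩ := Finset.not_subset.1 this
    obtain ⟨μ, hμ⟩ := sep_aux n B A hB hA S₀ hS₀B hS₀A
    exact ⟨μ, (xor_comm _ _).mp hμ⟩
  · obtain ⟨S₀, hS₀A, hS₀B⟩ := Finset.not_subset.1 hsub
    exact sep_aux n A B hA hB S₀ hS₀A hS₀B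
end

section
/- For every natural number n with n ≥ 4, every deterministic finite automaton over the alphabet of all subsets of {1,…,n} whose accepted language equals L_n has strictly more than 2^n states; here L_n is the set of all nonempty words μ₁μ₂…μ_k μ (with k ≥ 0) over this alphabet such that μ_i ∩ μ ≠ ∅ for every i ∈ {1,…,k}. -/
/-- `Ln n` is the language of all nonempty words `μ₁ μ₂ … μ_k μ` (with `k ≥ 0`)
over the alphabet of all subsets of `Fin n` such that every letter other than
the last one has nonempty intersection with the last letter. -/
def Ln (n : ℕ) : Language (Finset (Fin n)) :=
  { w | ∃ (ws : List (Finset (Fin n))) (μ : Finset (Fin n)),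
      w = ws ++ [μ] ∧ ∀ μi ∈ ws, (μi ∩ μ).Nonempty }

lemma single_mem_Ln (n : ℕ) (S : Finset (Fin n)) : [S] ∈ Ln n :=
  ⟨[], S, rfl, by simp⟩

lemma nil_not_mem_Ln (n : ℕ) : ([] : List (Finset (Fin n))) ∉ Ln n := by
  rintro ⟨ws, μ, h, -⟩
  simpa using congrArg List.length h

lemma pair_mem_Ln (n : ℕ) (S μ : Finset (Fin n)) :
    [S, μ] ∈ Ln n ↔ (S ∩ μ).Nonempty := by
  constructor
  · rintro ⟨ws, ν, h, hall⟩
    have h' : [S] ++ [μ] = ws ++ [ν] := h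
    obtain ⟨h1, h2⟩ := List.append_inj' h' rfl
    have hμ : μ = ν := by simpa using h2
    have hS : S ∈ ws := by rw [← h1]; simp
    simpa [← hμ] using hall S hS
  · intro h
    exact ⟨[S], μ, rfl, by simpa using h⟩

/-- For every `n ≥ 4`, every DFA over the alphabet of all subsets of `Fin n`
whose accepted language equals `Ln n` has strictly more than `2^n` states. -/
theorem dfa_for_Ln_has_more_than_two_pow_states
    {σ : Type*} [Fintype σ] (n : ℕ) (hn : 4 ≤ n)
    (M : DFA (Finset (Fin n)) σ) (hM : M.accepts = Ln n) :
    Fintype.card σ > 2 ^ n := by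
  classical
  have key : ∀ w : List (Finset (Fin n)), w ∈ M.accepts ↔ w ∈ Ln n := by
    intro w; rw [hM]
  -- states after reading [] and each single-letter word are pairwise distinct
  let f : Option (Finset (Fin n)) → σ := fun o =>
    match o with
    | none => M.eval []
    | some S => M.eval [S]
  have hne : ∀ S : Finset (Fin n), M.eval [] ≠ M.eval [S] := by
    intro S h
    have h1 : ([] : List (Finset (Fin n))) ∈ M.accepts ↔ [S] ∈ M.accepts := by
      rw [DFA.mem_accepts, DFA.mem_accepts, h]
    have := (h1.trans (key [S])).mpr (single_mem_Ln n S)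
    exact nil_not_mem_Ln n ((key []).mp this)
  have hST : ∀ S T : Finset (Fin n), M.eval [S] = M.eval [T] → S = T := by
    intro S T h
    by_contra hne'
    obtain ⟨x, hx⟩ : ∃ x, ¬ (x ∈ S ↔ x ∈ T) := by
      by_contra hall
      push_neg at hall
      exact hne' (Finset.ext fun x => hall x)
    have hsame : ∀ μ : Finset (Fin n), ([S, μ] ∈ M.accepts ↔ [T, μ] ∈ M.accepts) := by
      intro μ
      rw [DFA.mem_accepts, DFA.mem_accepts]
      have e1 : M.eval [S, μ] = M.evalFrom (M.eval [S]) [μ] :=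
        M.evalFrom_of_append M.start [S] [μ]
      have e2 : M.eval [T, μ] = M.evalFrom (M.eval [T]) [μ] :=
        M.evalFrom_of_append M.start [T] [μ]
      rw [show M.eval [S, μ] = M.eval [T, μ] by rw [e1, e2, h]]
    have hmem : ([S, {x}] ∈ Ln n ↔ [T, {x}] ∈ Ln n) :=
      (key _).symm.trans ((hsame {x}).trans (key _))
    rw [pair_mem_Ln, pair_mem_Ln] at hmem
    have conv : ∀ U : Finset (Fin n), (U ∩ {x}).Nonempty ↔ x ∈ U := by
      intro U
      constructor
      · rintro ⟨y, hy⟩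
        simp only [Finset.mem_inter, Finset.mem_singleton] at hy
        rw [← hy.2]; exact hy.1
      · intro h'; exact ⟨x, Finset.mem_inter.mpr ⟨h', Finset.mem_singleton_self x⟩⟩
    exact hx ((conv S).symm.trans (hmem.trans (conv T)))
  have hf : Function.Injective f := by
    intro a b hab
    match a, b with
    | none, none => rfl
    | none, some S => exact absurd hab (hne S)
    | some S, none => exact absurd hab.symm (hne S)
    | some S, some T => exact congrArg some (hST S T hab)
  have := Fintype.card_le_of_injective f hf
  simp only [Fintype.card_option, Fintype.card_finset, Fintype.card_fin] at this
  omega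
end

section
/- For every natural number n with n ≥ 1, every deterministic finite automaton over the alphabet of all subsets of {1,…,n} whose accepted language equals L_n has at least 2^{C(n,⌊n/2⌋)} states, where C(n,⌊n/2⌋) is the binomial coefficient; here L_n is the set of all nonempty words μ₁μ₂…μ_k μ (with k ≥ 0) over this alphabet such that μ_i ∩ μ ≠ ∅ for every i ∈ {1,…,k}. -/
lemma mem_Ln_iff {n : ℕ} (ws : List (Finset (Fin n))) (μ : Finset (Fin n)) :
    (ws ++ [μ]) ∈ Ln n ↔ ∀ ν ∈ ws, (ν ∩ μ).Nonempty := by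
  constructor
  · rintro ⟨ws', μ', h, hall⟩
    obtain ⟨h1, h2⟩ := List.append_inj' h rfl
    obtain rfl := h1
    simp only [List.cons.injEq] at h2
    obtain ⟨rfl, -⟩ := h2
    exact hall
  · intro h
    exact ⟨ws, μ, rfl, h⟩

/-- For every `n ≥ 1`, every DFA over the alphabet of all subsets of `Fin n`
whose accepted language equals `Ln n` has at least `2^(C(n, ⌊n/2⌋))` states. -/
theorem dfa_for_Ln_has_at_least_two_pow_central_binom_states
    {σ : Type*} [Fintype σ] (n : ℕ) (hn : 1 ≤ n)
    (M : DFA (Finset (Fin n)) σ) (hM : M.accepts = Ln n) :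
    2 ^ Nat.choose n (n / 2) ≤ Fintype.card σ := by
  classical
  set A : Finset (Finset (Fin n)) := Finset.powersetCard (n / 2) Finset.univ with hA
  have hAcard : A.card = Nat.choose n (n / 2) := by
    simp [hA, Finset.card_powersetCard]
  have hmemA : ∀ ν ∈ A, ν.card = n / 2 := by
    intro ν hν
    simpa [hA, Finset.mem_powersetCard] using hν
  -- key: if two subsets of A give the same state, they are equal (one inclusion suffices)
  have key : ∀ S T : Finset (Finset (Fin n)), S ∈ A.powerset → T ∈ A.powerset →
      M.eval S.toList = M.eval T.toList → S ⊆ T := by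
    intro S T hS hT heq ν hνS
    rw [Finset.mem_powerset] at hS hT
    by_contra hνT
    have hcard : ν.card = n / 2 := hmemA ν (hS hνS)
    -- suffix [νᶜ] distinguishes
    have h1 : (S.toList ++ [νᶜ]) ∉ Ln n := by
      rw [mem_Ln_iff]
      intro h
      have := h ν (Finset.mem_toList.2 hνS)
      simp at this
    have h2 : (T.toList ++ [νᶜ]) ∈ Ln n := by
      rw [mem_Ln_iff]
      intro μ hμ
      rw [Finset.mem_toList] at hμ
      have hμcard : μ.card = n / 2 := hmemA μ (hT hμ)
      have hne : ¬ μ ⊆ ν := by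
        intro hsub
        have : μ = ν := Finset.eq_of_subset_of_card_le hsub (by omega)
        exact hνT (this ▸ hμ)
      have : μ ∩ νᶜ = μ \ ν := by ext x; simp [and_comm]
      rw [this]
      exact Finset.sdiff_nonempty.2 hne
    rw [← hM] at h1 h2
    rw [DFA.mem_accepts] at h1 h2
    rw [DFA.eval_append_singleton] at h1 h2
    rw [heq] at h1
    exact h1 h2
  -- injective map from powerset of A to states
  have hinj : Set.InjOn (fun S : Finset (Finset (Fin n)) => M.eval S.toList)
      ↑A.powerset := by
    intro S hS T hT h
    simp only [Finset.coe_powerset, Set.mem_preimage, Set.mem_powerset_iff] at hS hT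
    exact le_antisymm (key S T (by simpa using hS) (by simpa using hT) h)
      (key T S (by simpa using hT) (by simpa using hS) h.symm)
  have := Finset.card_le_card_of_injOn (fun S : Finset (Finset (Fin n)) => M.eval S.toList)
    (fun S _ => Finset.mem_univ _) hinj
  rw [Finset.card_powerset, hAcard, Finset.card_univ] at this
  exact this
end
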